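/- Let G be a formal power series in x, y_1, …, y_t over ℚ with zero constant term satisfying G = x·∏_{i=1}^{t}(1 + y_i·G). Then for all integers n ≥ 1 and m with 1 ≤ m ≤ n, and every tuple of natural numbers (a_1, …, a_t) with a_1 + ⋯ + a_t = n − m, the coefficient of x^n·y_1^{a_1}⋯y_t^{a_t} in the m-th power G^m equals (m/n)·C(n,a_1)·C(n,a_2)⋯C(n,a_t), where C(n,k) denotes the binomial coefficient. -/

import Mathlib

open Finset

-- K1: Vandermonde over range
lemma vand_range (p q c : ℕ) :
    ∑ k ∈ range (c+1), (p.choose k : ℚ) * q.choose (c-k) = ((p+q).choose c : ℚ) := by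
  have h := Nat.add_choose_eq p q c
  rw [Finset.Nat.sum_antidiagonal_eq_sum_range_succ (fun x y => p.choose x * q.choose y)] at h
  rw [h]
  push_cast
  rfl

lemma K2 (m N c n : ℕ) (hm : 1 ≤ m) (hn : n = m + N) :
    ∑ k ∈ range (c+1), (k : ℚ) * m.choose k * N.choose (c-k)
      = (m : ℚ) * c / n * n.choose c := by
  have hn1 : 1 ≤ n := hn ▸ le_add_right hm
  rcases Nat.eq_zero_or_pos c with hc | hc
  · subst hc; simp
  obtain ⟨c', rfl⟩ : ∃ c', c = c' + 1 := ⟨c - 1, by omega⟩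
  obtain ⟨m', rfl⟩ : ∃ m', m = m' + 1 := ⟨m - 1, by omega⟩
  obtain ⟨n', rfl⟩ : ∃ n', n = n' + 1 := ⟨n - 1, by omega⟩
  rw [Finset.sum_range_succ']
  simp only [Nat.cast_zero, zero_mul, add_zero]
  have hiter : ∀ j : ℕ, ((j:ℚ)+1) * (m'+1).choose (j+1) = ((m':ℚ)+1) * m'.choose j := by
    intro j
    have h2 : ((m'.succ * m'.choose j : ℕ) : ℚ) = (((m'+1).choose (j+1) * (j+1) : ℕ) : ℚ) := by
      rw [Nat.add_one_mul_choose_eq]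
    push_cast at h2
    linarith [h2]
  have key : ((n':ℚ)+1) * n'.choose c' = ((n'+1).choose (c'+1) : ℚ) * (c'+1) := by
    have h2 : ((n'.succ * n'.choose c' : ℕ) : ℚ) = (((n'+1).choose (c'+1) * (c'+1) : ℕ) : ℚ) := by
      rw [Nat.add_one_mul_choose_eq]
    push_cast at h2
    linarith [h2]
  calc ∑ k ∈ range (c'+1), ((k+1:ℕ):ℚ) * (m'+1).choose (k+1) * N.choose (c'+1 - (k+1))
      = ∑ k ∈ range (c'+1), ((m':ℚ)+1) * (m'.choose k * N.choose (c' - k)) := by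
        apply Finset.sum_congr rfl
        intro k hk
        rw [show c'+1 - (k+1) = c' - k by omega]
        push_cast
        rw [hiter k]; ring
    _ = ((m':ℚ)+1) * ∑ k ∈ range (c'+1), (m'.choose k : ℚ) * N.choose (c' - k) := by
        rw [← Finset.mul_sum]
    _ = ((m':ℚ)+1) * (m' + N).choose c' := by rw [vand_range]
    _ = ((m'+1:ℕ) : ℚ) * (c'+1:ℕ) / ((n'+1:ℕ)) * ((n'+1).choose (c'+1)) := by
        have hb : m' + N = n' := by omega
        rw [hb]
        have hpos : ((n':ℚ) + 1) ≠ 0 := by positivity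
        push_cast
        field_simp
        nlinarith [key]

lemma multi_key (t m N n : ℕ) (hm : 1 ≤ m) (hN : 1 ≤ N) (hn : n = m + N)
    (a : Fin t → ℕ) (hs : ∑ i, a i = N) :
    ∑ b ∈ Fintype.piFinset (fun i : Fin t => range (a i + 1)),
      (((∑ i, b i : ℕ) : ℚ)/N) * ∏ i, ((m.choose (b i) : ℚ) * N.choose (a i - b i))
      = (m/n : ℚ) * ∏ i, (n.choose (a i) : ℚ) := by
  have hNQ : (N:ℚ) ≠ 0 := by positivity
  have hstep : ∀ j : Fin t,
      (∑ b ∈ Fintype.piFinset (fun i : Fin t => range (a i + 1)),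
        ((b j : ℚ)) * ∏ i, ((m.choose (b i) : ℚ) * N.choose (a i - b i)))
      = (m:ℚ) * a j / n * ∏ i, (n.choose (a i) : ℚ) := by
    intro j
    have hfac :
        (∑ b ∈ Fintype.piFinset (fun i : Fin t => range (a i + 1)),
          ∏ i, ((if i = j then (b i : ℚ) else 1) * ((m.choose (b i) : ℚ) * N.choose (a i - b i))))
        = ∏ i, ∑ k ∈ range (a i + 1),
            ((if i = j then (k : ℚ) else 1) * ((m.choose k : ℚ) * N.choose (a i - k))) := by
      rw [Finset.prod_univ_sum]
    have hL :
        (∑ b ∈ Fintype.piFinset (fun i : Fin t => range (a i + 1)),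
          ((b j : ℚ)) * ∏ i, ((m.choose (b i) : ℚ) * N.choose (a i - b i)))
        = ∑ b ∈ Fintype.piFinset (fun i : Fin t => range (a i + 1)),
          ∏ i, ((if i = j then (b i : ℚ) else 1) * ((m.choose (b i) : ℚ) * N.choose (a i - b i))) := by
      apply Finset.sum_congr rfl
      intro b _
      rw [eq_comm, Finset.prod_mul_distrib, Finset.prod_ite_eq' Finset.univ j (fun i => (b i : ℚ)), Finset.prod_mul_distrib]
      simp [mul_assoc]
    rw [hL, hfac]
    rw [← Finset.mul_prod_erase Finset.univ _ (Finset.mem_univ j)]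
    have hj : ∑ k ∈ range (a j + 1),
        ((if j = j then (k : ℚ) else 1) * ((m.choose k : ℚ) * N.choose (a j - k)))
        = (m:ℚ) * a j / n * n.choose (a j) := by
      rw [← K2 m N (a j) n hm hn]
      apply Finset.sum_congr rfl
      intro k _
      rw [if_pos rfl]; ring
    have hne : ∀ i ∈ Finset.univ.erase j,
        (∑ k ∈ range (a i + 1),
          ((if i = j then (k : ℚ) else 1) * ((m.choose k : ℚ) * N.choose (a i - k))))
        = (n.choose (a i) : ℚ) := by
      intro i hi
      have : ∀ k ∈ range (a i + 1),
          ((if i = j then (k : ℚ) else 1) * ((m.choose k : ℚ) * N.choose (a i - k)))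
          = (m.choose k : ℚ) * N.choose (a i - k) := by
        intro k _
        rw [if_neg (Finset.mem_erase.mp hi).1, one_mul]
      rw [Finset.sum_congr rfl this, vand_range, ← hn]
    rw [hj, Finset.prod_congr rfl hne]
    rw [← Finset.mul_prod_erase Finset.univ (fun i => (n.choose (a i) : ℚ)) (Finset.mem_univ j)]
    ring
  calc ∑ b ∈ Fintype.piFinset (fun i : Fin t => range (a i + 1)),
        (((∑ i, b i : ℕ) : ℚ)/N) * ∏ i, ((m.choose (b i) : ℚ) * N.choose (a i - b i))
      = (1/(N:ℚ)) * ∑ j : Fin t, ∑ b ∈ Fintype.piFinset (fun i : Fin t => range (a i + 1)),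
          ((b j : ℚ)) * ∏ i, ((m.choose (b i) : ℚ) * N.choose (a i - b i)) := by
        have hb : ∀ b : Fin t → ℕ,
            (((∑ i, b i : ℕ):ℚ)/N) * ∏ i, ((m.choose (b i):ℚ) * N.choose (a i - b i))
            = ∑ j : Fin t, (1/(N:ℚ)) * ((b j : ℚ) * ∏ i, ((m.choose (b i):ℚ) * N.choose (a i - b i))) := by
          intro b
          rw [← Finset.mul_sum, ← Finset.sum_mul]
          push_cast
          ring
        rw [Finset.sum_congr rfl (fun b _ => hb b), Finset.sum_comm, Finset.mul_sum]
        exact Finset.sum_congr rfl (fun j _ => by rw [Finset.mul_sum])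
    _ = (m/n : ℚ) * ∏ i, (n.choose (a i) : ℚ) := by
        simp only [hstep]
        rw [Finset.mul_sum]
        have hK : ∀ j : Fin t, (1/(N:ℚ)) * ((m:ℚ) * a j / n * ∏ i, (n.choose (a i):ℚ))
            = (a j : ℚ) * ((1/(N:ℚ)) * ((m:ℚ) / n * ∏ i, (n.choose (a i):ℚ))) := by
          intro j; ring
        rw [Finset.sum_congr rfl (fun j _ => hK j), ← Finset.sum_mul, ← Nat.cast_sum, hs]
        rw [← mul_assoc, mul_one_div, div_self hNQ, one_mul]

open Finset MvPowerSeries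

variable {t : ℕ}

private noncomputable def M (t : ℕ) (n : ℕ) (a : Fin t → ℕ) : Fin (t+1) →₀ ℕ :=
  Finsupp.equivFunOnFinite.symm (Fin.cons n a)

@[simp] private lemma M_apply_zero (n : ℕ) (a : Fin t → ℕ) : M t n a 0 = n := rfl

@[simp] private lemma M_apply_succ (n : ℕ) (a : Fin t → ℕ) (i : Fin t) :
    M t n a i.succ = a i := by
  show (Fin.cons n a : Fin (t+1) → ℕ) i.succ = a i
  simp

private lemma M_le_iff {n m : ℕ} {a b : Fin t → ℕ} :
    M t m b ≤ M t n a ↔ m ≤ n ∧ ∀ i, b i ≤ a i := by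
  rw [Finsupp.le_def]
  constructor
  · intro h
    exact ⟨h 0, fun i => h i.succ⟩
  · intro ⟨h0, hs⟩ j
    induction j using Fin.cases with
    | zero => simpa using h0
    | succ i => simpa using hs i

private lemma M_sub {n m : ℕ} {a b : Fin t → ℕ} :
    M t n a - M t m b = M t (n - m) (fun i => a i - b i) := by
  ext j
  rw [Finsupp.tsub_apply]
  induction j using Fin.cases with
  | zero => simp
  | succ i => simp

private lemma M_eq_sum (m : ℕ) (b : Fin t → ℕ) :
    M t m b = Finsupp.single 0 m + ∑ i : Fin t, Finsupp.single i.succ (b i) := by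
  ext j
  rw [Finsupp.add_apply, Finsupp.coe_finset_sum, Finset.sum_apply]
  induction j using Fin.cases with
  | zero =>
    rw [M_apply_zero, Finsupp.single_apply, if_pos rfl]
    have : ∀ i : Fin t, (Finsupp.single i.succ (b i) : Fin (t+1) →₀ ℕ) 0 = 0 := by
      intro i
      rw [Finsupp.single_apply, if_neg (Fin.succ_ne_zero i)]
    rw [Finset.sum_congr rfl (fun i _ => this i)]
    simp
  | succ i =>
    rw [M_apply_succ, Finsupp.single_apply, if_neg (Fin.succ_ne_zero i).symm, zero_add]
    have : ∀ i' : Fin t, (Finsupp.single i'.succ (b i') : Fin (t+1) →₀ ℕ) i.succ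
        = if i' = i then b i' else 0 := by
      intro i'
      rw [Finsupp.single_apply]
      congr 1
      simp [Fin.succ_inj]
    rw [Finset.sum_congr rfl (fun i' _ => this i'), Finset.sum_ite_eq' Finset.univ i b]
    simp

private lemma prod_monomial_one {ι : Type*} (s : Finset ι) (f : ι → (Fin (t+1) →₀ ℕ)) :
    ∏ i ∈ s, (monomial (f i) (1:ℚ)) = monomial (∑ i ∈ s, f i) 1 := by
  induction s using Finset.cons_induction with
  | empty => simp [MvPowerSeries.monomial_zero_one]
  | cons x s hx ih =>
    rw [Finset.prod_cons, Finset.sum_cons, ih, MvPowerSeries.monomial_mul_monomial, one_mul]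

private lemma X_pow_prod (m : ℕ) (b : Fin t → ℕ) :
    (X (0 : Fin (t+1)) : MvPowerSeries (Fin (t+1)) ℚ) ^ m
        * ∏ i : Fin t, (X i.succ : MvPowerSeries (Fin (t+1)) ℚ) ^ (b i)
      = monomial (M t m b) 1 := by
  have h1 : ∀ i : Fin t, (X i.succ : MvPowerSeries (Fin (t+1)) ℚ) ^ (b i)
      = monomial (Finsupp.single i.succ (b i)) 1 := fun i => X_pow_eq _ _
  rw [Finset.prod_congr rfl (fun i _ => h1 i), prod_monomial_one, X_pow_eq,
    MvPowerSeries.monomial_mul_monomial, one_mul, M_eq_sum]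

private lemma expand_pow (G : MvPowerSeries (Fin (t+1)) ℚ)
    (hG : G = MvPowerSeries.X 0 * ∏ i : Fin t, (1 + MvPowerSeries.X i.succ * G)) (m : ℕ) :
    G ^ m = ∑ b ∈ Fintype.piFinset (fun _ : Fin t => range (m+1)),
      (C) (∏ i, (m.choose (b i) : ℚ))
        * (monomial (M t m b) 1 * G ^ (∑ i, b i)) := by
  conv_lhs => rw [hG]
  rw [mul_pow, ← Finset.prod_pow]
  have hfac : ∀ i : Fin t, (1 + MvPowerSeries.X i.succ * G) ^ m
      = ∑ k ∈ range (m+1),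
          (X i.succ : MvPowerSeries (Fin (t+1)) ℚ) ^ k * G ^ k
            * (C) ((m.choose k : ℚ)) := by
    intro i
    rw [show (1 : MvPowerSeries (Fin (t+1)) ℚ) + X i.succ * G = X i.succ * G + 1 from add_comm _ _, add_pow]
    apply Finset.sum_congr rfl
    intro k _
    rw [mul_pow, one_pow, mul_one]
    rw [map_natCast]
  rw [Finset.prod_congr rfl (fun i _ => hfac i), Finset.prod_univ_sum]
  rw [Finset.mul_sum]
  apply Finset.sum_congr rfl
  intro b _
  rw [Finset.prod_mul_distrib, Finset.prod_mul_distrib, Finset.prod_pow_eq_pow_sum,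
    ← map_prod, ← X_pow_prod m b]
  ring
private lemma coeff_zero_pow_one {t : ℕ} :
    M t 0 (fun _ : Fin t => 0) = 0 := by
  ext j
  induction j using Fin.cases with
  | zero => simp
  | succ i => simp

private lemma key {t : ℕ} (G : MvPowerSeries (Fin (t+1)) ℚ)
    (hG : G = MvPowerSeries.X 0 * ∏ i : Fin t, (1 + MvPowerSeries.X i.succ * G)) :
    ∀ n m : ℕ, ∀ a : Fin t → ℕ, 1 ≤ m → m ≤ n → ∑ i, a i = n - m →
      MvPowerSeries.coeff (M t n a) (G ^ m)
        = (m / n : ℚ) * ∏ i, (n.choose (a i) : ℚ) := by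
  intro n
  induction n using Nat.strong_induction_on with
  | _ n IH =>
    intro m a hm hmn ha
    set F : (Fin t → ℕ) → ℚ := fun b =>
      (∏ i, (m.choose (b i) : ℚ)) *
        (if ∀ i, b i ≤ a i then
          MvPowerSeries.coeff (M t (n-m) (fun i => a i - b i)) (G ^ (∑ i, b i)) else 0)
      with hF
    have step1 : MvPowerSeries.coeff (M t n a) (G ^ m)
        = ∑ b ∈ Fintype.piFinset (fun _ : Fin t => range (m+1)), F b := by
      rw [expand_pow G hG m, map_sum]
      apply Finset.sum_congr rfl
      intro b _
      rw [MvPowerSeries.coeff_C_mul, MvPowerSeries.coeff_monomial_mul, hF]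
      simp only []
      by_cases hle : ∀ i, b i ≤ a i
      · rw [if_pos (M_le_iff.mpr ⟨hmn, hle⟩), if_pos hle, M_sub, one_mul]
      · rw [if_neg (fun h => hle (M_le_iff.mp h).2), if_neg hle]
    have hT : ∀ (S : Finset (Fin t → ℕ)),
        S ⊆ Fintype.piFinset (fun i : Fin t => range (m + a i + 1)) →
        (∀ b ∈ Fintype.piFinset (fun i : Fin t => range (m + a i + 1)), b ∉ S → F b = 0) →
        ∑ b ∈ S, F b = ∑ b ∈ Fintype.piFinset (fun i : Fin t => range (m + a i + 1)), F b :=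
      fun S h1 h2 => Finset.sum_subset h1 h2
    have step2 : ∑ b ∈ Fintype.piFinset (fun _ : Fin t => range (m+1)), F b
        = ∑ b ∈ Fintype.piFinset (fun i : Fin t => range (a i + 1)), F b := by
      have e1 : ∑ b ∈ Fintype.piFinset (fun _ : Fin t => range (m+1)), F b
          = ∑ b ∈ Fintype.piFinset (fun i : Fin t => range (m + a i + 1)), F b := by
        apply hT
        · intro b hb
          rw [Fintype.mem_piFinset] at hb ⊢
          intro i
          have := hb i
          rw [Finset.mem_range] at this ⊢
          omega
        · intro b _ hb
          rw [Fintype.mem_piFinset] at hb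
          push_neg at hb
          obtain ⟨i, hi⟩ := hb
          rw [Finset.mem_range] at hi
          push_neg at hi
          have hch : m.choose (b i) = 0 := Nat.choose_eq_zero_of_lt (by omega)
          rw [hF]
          simp only []
          rw [Finset.prod_eq_zero (Finset.mem_univ i) (by rw [hch]; norm_num), zero_mul]
      have e2 : ∑ b ∈ Fintype.piFinset (fun i : Fin t => range (a i + 1)), F b
          = ∑ b ∈ Fintype.piFinset (fun i : Fin t => range (m + a i + 1)), F b := by
        apply hT
        · intro b hb
          rw [Fintype.mem_piFinset] at hb ⊢
          intro i
          have := hb i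
          rw [Finset.mem_range] at this ⊢
          omega
        · intro b _ hb
          rw [Fintype.mem_piFinset] at hb
          push_neg at hb
          obtain ⟨i, hi⟩ := hb
          rw [Finset.mem_range] at hi
          push_neg at hi
          rw [hF]
          simp only []
          rw [if_neg (fun h => by have := h i; omega), mul_zero]
      exact e1.trans e2.symm
    rw [step1, step2]
    rcases Nat.lt_or_ge m n with hlt | hge
    · -- main case m < n
      set N := n - m with hNdef
      have hN : 1 ≤ N := by omega
      have hn : n = m + N := by omega
      have hterm : ∀ b ∈ Fintype.piFinset (fun i : Fin t => range (a i + 1)),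
          F b = (((∑ i, b i : ℕ) : ℚ)/N) *
            ∏ i, ((m.choose (b i) : ℚ) * N.choose (a i - b i)) := by
        intro b hb
        rw [Fintype.mem_piFinset] at hb
        have hba : ∀ i, b i ≤ a i := fun i => by
          have := hb i; rw [Finset.mem_range] at this; omega
        rw [hF]
        simp only []
        rw [if_pos hba]
        have hsum_le : ∑ i, b i ≤ N := by
          rw [← ha]
          exact Finset.sum_le_sum (fun i _ => hba i)
        rcases Nat.eq_zero_or_pos (∑ i, b i) with hz | hpos
        · have hb0 : ∀ i, b i = 0 := by
            intro i
            have := Finset.sum_eq_zero_iff.mp hz i (Finset.mem_univ i)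
            exact this
          rw [hz, pow_zero]
          have hne : M t (n-m) (fun i => a i - b i) ≠ 0 := by
            intro h
            have := congrArg (fun f => f 0) h
            simp only [M_apply_zero] at this
            simp at this
            omega
          rw [MvPowerSeries.coeff_one, if_neg hne]
          simp [hz]
        · have hsub : ∑ i, (a i - b i) = N - ∑ i, b i := by
            have h1 : ∑ i, ((a i - b i) + b i) = ∑ i, a i :=
              Finset.sum_congr rfl (fun i _ => by have := hba i; omega)
            rw [Finset.sum_add_distrib] at h1
            omega
          rw [IH N (by omega) (∑ i, b i) (fun i => a i - b i) hpos hsum_le hsub]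
          rw [Finset.prod_mul_distrib]
          ring
      rw [Finset.sum_congr rfl hterm]
      rw [multi_key t m N n hm hN hn a ha]
    · -- case n = m
      have hnm : n = m := le_antisymm hge hmn
      have ha0 : ∀ i, a i = 0 := by
        intro i
        have h0 : ∑ i, a i = 0 := by omega
        exact Finset.sum_eq_zero_iff.mp h0 i (Finset.mem_univ i)
      have hmem : (fun _ : Fin t => 0) ∈ Fintype.piFinset (fun i : Fin t => range (a i + 1)) := by
        rw [Fintype.mem_piFinset]
        intro i
        rw [Finset.mem_range]
        omega
      rw [Finset.sum_eq_single_of_mem (fun _ : Fin t => 0) hmem (fun b hb hne => ?uniq)]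
      case uniq =>
        exfalso
        apply hne
        funext i
        rw [Fintype.mem_piFinset] at hb
        have := hb i
        rw [Finset.mem_range, ha0 i] at this
        omega
      rw [hF]
      simp only []
      rw [if_pos (fun i => Nat.zero_le _)]
      have h1 : ∑ i : Fin t, (0:ℕ) = 0 := by simp
      rw [h1, pow_zero]
      have h2 : M t (n - m) (fun i => a i - 0) = 0 := by
        have : (fun i => a i - 0) = (fun _ : Fin t => 0) := by
          funext i; rw [ha0 i]
        rw [this, show n - m = 0 by omega]
        exact coeff_zero_pow_one
      rw [h2, MvPowerSeries.coeff_one, if_pos rfl]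
      subst hnm
      have hn0 : (n:ℚ) ≠ 0 := by
        have : 1 ≤ n := hm
        positivity
      simp [ha0, div_self hn0]



/-- Let `G` be a formal power series in `x, y_1, …, y_t` over `ℚ`
(variable `0` is `x`, variable `i.succ` is `y_i`) with zero constant term satisfying
`G = x·∏_{i=1}^t (1 + y_i·G)`. Then for all `1 ≤ m ≤ n` and every tuple `a` with
`∑ a_i = n - m`, the coefficient of `x^n·y_1^{a_1}⋯y_t^{a_t}` in `G^m` equals
`(m/n)·∏_{i=1}^t C(n, a_i)`. -/
theorem tary_tree_gf_pow_coeff (t : ℕ) (ht : 1 ≤ t)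
    (G : MvPowerSeries (Fin (t + 1)) ℚ)
    (hG0 : MvPowerSeries.constantCoeff G = 0)
    (hG : G = MvPowerSeries.X 0 * ∏ i : Fin t, (1 + MvPowerSeries.X i.succ * G))
    (n m : ℕ) (hm : 1 ≤ m) (hmn : m ≤ n) (a : Fin t → ℕ) (ha : ∑ i, a i = n - m) :
    MvPowerSeries.coeff (Finsupp.equivFunOnFinite.symm (Fin.cons n a)) (G ^ m) =
      (m / n : ℚ) * ∏ i, (n.choose (a i) : ℚ) := by
  exact key G hG n m a hm hmn ha
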